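/- Let (Ω, F, μ) be a probability space and let A, B ⊆ Ω be measurable events, where A represents the event {T = 1} (intervention alters both deep and surface structure) and B represents the event {Ŷ = 1} (the model's output changes after intervention). Assume μ(A) = μ(Aᶜ) = 1/2, μ(A ∩ B) > 0, and μ(Aᶜ ∩ Bᶜ) > 0. Define the approximated direct causal effect δ_ADCE = μ(B | A) − μ(B | Aᶜ), the probability of necessity δ_PN = (μ(Bᶜ) − μ(Bᶜ | A)) / μ(Aᶜ ∩ Bᶜ), the probability of sufficiency δ_PS = (μ(Bᶜ | Aᶜ) − μ(Bᶜ)) / μ(A ∩ B), and set α = μ(B | A) and β = μ(Bᶜ | Aᶜ). Then δ_ADCE = (α/2)·δ_PS + (β/2)·δ_PN. -/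
import Mathlib


open MeasureTheory

/-- Conditional probability μ(B | A) = μ(A ∩ B) / μ(A), as a real number. -/
noncomputable def condProb {Ω : Type*} [MeasurableSpace Ω] (μ : Measure Ω) (A B : Set Ω) : ℝ :=
  (μ (A ∩ B)).toReal / (μ A).toReal

/-- Theorem 1 (ADCE as a combination of PN and PS): with μ(T=1) = μ(T=0) = 1/2,
δ_ADCE = (α/2)·δ_PS + (β/2)·δ_PN, where α = μ(Ŷ=1 | T=1) and β = μ(Ŷ=0 | T=0). -/
theorem adce_eq_ps_pn_combination {Ω : Type*} [MeasurableSpace Ω]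
    (μ : Measure Ω) [IsProbabilityMeasure μ] (A B : Set Ω)
    (hA : MeasurableSet A) (hB : MeasurableSet B)
    (hA2 : μ A = 1 / 2) (hAc2 : μ Aᶜ = 1 / 2)
    (hAB : 0 < μ (A ∩ B)) (hAcBc : 0 < μ (Aᶜ ∩ Bᶜ)) :
    condProb μ A B - condProb μ Aᶜ B =
      (condProb μ A B / 2) *
        ((condProb μ Aᶜ Bᶜ - (μ Bᶜ).toReal) / (μ (A ∩ B)).toReal) +
      (condProb μ Aᶜ Bᶜ / 2) *
        (((μ Bᶜ).toReal - condProb μ A Bᶜ) / (μ (Aᶜ ∩ Bᶜ)).toReal) := by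
  have fin : ∀ s : Set Ω, μ s ≠ ⊤ := fun s => measure_ne_top μ s
  set a := (μ (A ∩ B)).toReal with ha
  set b := (μ (A ∩ Bᶜ)).toReal with hb
  set c := (μ (Aᶜ ∩ B)).toReal with hc
  set d := (μ (Aᶜ ∩ Bᶜ)).toReal with hd
  have hsplitA : μ (A ∩ B) + μ (A ∩ Bᶜ) = μ A := by
    have := measure_inter_add_diff A hB (μ := μ)
    simpa [Set.diff_eq] using this
  have hsplitAc : μ (Aᶜ ∩ B) + μ (Aᶜ ∩ Bᶜ) = μ Aᶜ := by
    have := measure_inter_add_diff Aᶜ hB (μ := μ)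
    simpa [Set.diff_eq] using this
  have hsplitBc : μ (A ∩ Bᶜ) + μ (Aᶜ ∩ Bᶜ) = μ Bᶜ := by
    have := measure_inter_add_diff Bᶜ hA (μ := μ)
    simpa [Set.diff_eq, Set.inter_comm] using this
  have hab : a + b = 1 / 2 := by
    rw [ha, hb, ← ENNReal.toReal_add (fin _) (fin _), hsplitA, hA2]
    norm_num
  have hcd : c + d = 1 / 2 := by
    rw [hc, hd, ← ENNReal.toReal_add (fin _) (fin _), hsplitAc, hAc2]
    norm_num
  have hbd : (μ Bᶜ).toReal = b + d := by
    rw [hb, hd, ← ENNReal.toReal_add (fin _) (fin _), hsplitBc]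
  have hapos : 0 < a := ENNReal.toReal_pos hAB.ne' (fin _)
  have hdpos : 0 < d := ENNReal.toReal_pos hAcBc.ne' (fin _)
  have hAr : (μ A).toReal = 1 / 2 := by rw [hA2]; norm_num
  have hAcr : (μ Aᶜ).toReal = 1 / 2 := by rw [hAc2]; norm_num
  simp only [condProb, ← ha, ← hb, ← hc, ← hd, hAr, hAcr, hbd]
  field_simp
  nlinarith [hab, hcd, hapos, hdpos, mul_pos hapos hdpos, sq_nonneg (a-d), sq_nonneg (a+d)]
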